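/- For 0 ≤ s < 4 and integer n > 1 - s/2, as t → 0⁺ one has ∫_{-1}^{1}∫_{-1}^{1} (1-xy+t)^{-s/2-n-1} dx dy ∼ A_{s,n} t^{1-s/2-n}, where A_{s,n} = 2/((n+s/2)(n+s/2-1)). -/

import Mathlib

open MeasureTheory Filter intervalIntegral Set



lemma integral_rpow_linear (c k r a b : ℝ) (hr : r ≠ 0) (hk : k ≠ 0)
    (hpos : ∀ y ∈ Set.uIcc a b, 0 < c - k*y) :
    ∫ y in a..b, (c - k*y) ^ (-r-1) =
      ((c - k*b) ^ (-r) - (c - k*a) ^ (-r)) / (r*k) := by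
  have h := intervalIntegral.integral_eq_sub_of_hasDerivAt
    (f := fun y => (c - k*y) ^ (-r) / (r*k))
    (f' := fun y => (c - k*y) ^ (-r-1)) (a := a) (b := b) ?_ ?_
  · rw [h]; ring
  · intro y hy
    have hy' := hpos y hy
    have h1 : HasDerivAt (fun y : ℝ => c - k*y) (-k) y := by
      simpa using ((hasDerivAt_id y).const_mul k).const_sub c
    have h2 := h1.rpow_const (p := -r) (Or.inl hy'.ne')
    have h3 := h2.div_const (r*k)
    refine h3.congr_deriv ?_
    show _ = (c - k*y) ^ (-r-1)
    rw [div_eq_iff (by simp [hr, hk])]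
    ring
  · apply ContinuousOn.intervalIntegrable
    apply ContinuousOn.rpow_const (by fun_prop)
    intro y hy; exact Or.inl (hpos y hy).ne'

lemma rpow_sub_bound (r : ℝ) (hr : 0 < r) {a b : ℝ} (ha : 0 < a) (hab : a ≤ b) :
    a ^ (-r) - b ^ (-r) ≤ r * a ^ (-r-1) * (b - a) := by
  have key : MonotoneOn (fun u : ℝ => u ^ (-r) + r * a ^ (-r-1) * u) (Set.Icc a b) := by
    apply monotoneOn_of_deriv_nonneg (convex_Icc a b)
    · apply ContinuousOn.add ?_ (by fun_prop)
      apply ContinuousOn.rpow_const (by fun_prop)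
      intro u hu; exact Or.inl (lt_of_lt_of_le ha hu.1).ne'
    · intro u hu
      rw [interior_Icc] at hu
      exact ((Real.hasDerivAt_rpow_const (p := -r) (Or.inl (ha.trans hu.1).ne')).add
        ((hasDerivAt_id u).const_mul (r * a ^ (-r-1)))).differentiableAt.differentiableWithinAt
    · intro u hu
      rw [interior_Icc] at hu
      have hd : HasDerivAt (fun u : ℝ => u ^ (-r) + r * a ^ (-r-1) * u)
          (-r * u ^ (-r-1) + r * a ^ (-r-1) * 1) u := by
        exact (Real.hasDerivAt_rpow_const (p := -r) (Or.inl (ha.trans hu.1).ne')).add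
          ((hasDerivAt_id u).const_mul (r * a ^ (-r-1)))
      rw [hd.deriv]
      have : u ^ (-r-1) ≤ a ^ (-r-1) :=
        Real.rpow_le_rpow_of_nonpos ha hu.1.le (by linarith)
      nlinarith
  have h := key (Set.left_mem_Icc.2 hab) (Set.right_mem_Icc.2 hab) hab
  simp only at h
  nlinarith


noncomputable def phi (q t x : ℝ) : ℝ := ((1+t-x)^(-q) - (1+t+x)^(-q))/(q*x)

lemma phi_even (q t x : ℝ) : phi q t (-x) = phi q t x := by
  unfold phi
  rw [show (1:ℝ)+t-(-x) = 1+t+x by ring, show (1:ℝ)+t+(-x) = 1+t-x by ring,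
    mul_neg, div_neg, ← neg_div, neg_sub]

lemma phi_bounds (q t x : ℝ) (hq : 0 < q) (ht : 0 < t) (hx : x ∈ Set.Icc (-1:ℝ) 1) :
    0 ≤ phi q t x ∧ phi q t x ≤ 2*(1+t-|x|)^(-q-1) := by
  obtain ⟨hx1, hx2⟩ := hx
  rcases lt_trichotomy x 0 with hx0 | hx0 | hx0
  · have hB : 0 < 1+t+x := by linarith
    have hBA : 1+t+x ≤ 1+t-x := by linarith
    have h1 : (1+t-x)^(-q) - (1+t+x)^(-q) ≤ 0 := by
      have := Real.rpow_le_rpow_of_nonpos hB hBA (neg_nonpos.2 hq.le)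
      linarith
    have h2 : (1+t+x)^(-q) - (1+t-x)^(-q) ≤ q * (1+t+x)^(-q-1) * ((1+t-x) - (1+t+x)) :=
      rpow_sub_bound q hq hB hBA
    have habs : |x| = -x := abs_of_neg hx0
    constructor
    · have hd := div_nonneg (neg_nonneg.2 h1) (neg_nonneg.2 (by nlinarith : q*x ≤ 0))
      rwa [neg_div_neg_eq] at hd
    · unfold phi
      rw [habs, show (1:ℝ)+t- -x = 1+t+x by ring, div_le_iff_of_neg (by nlinarith)]
      nlinarith [Real.rpow_nonneg (by linarith : (0:ℝ) ≤ 1+t+x) (-q-1)]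
  · subst hx0
    simp only [phi, mul_zero, div_zero]
    refine ⟨le_refl _, by rw [abs_zero, sub_zero]; positivity⟩
  · have hA : 0 < 1+t-x := by linarith
    have hAB : 1+t-x ≤ 1+t+x := by linarith
    have h1 : 0 ≤ (1+t-x)^(-q) - (1+t+x)^(-q) := by
      have := Real.rpow_le_rpow_of_nonpos hA hAB (neg_nonpos.2 hq.le)
      linarith
    have h2 : (1+t-x)^(-q) - (1+t+x)^(-q) ≤ q * (1+t-x)^(-q-1) * ((1+t+x) - (1+t-x)) :=
      rpow_sub_bound q hq hA hAB
    have habs : |x| = x := abs_of_pos hx0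
    constructor
    · exact div_nonneg h1 (by positivity)
    · unfold phi
      rw [habs, div_le_iff₀ (by positivity)]
      nlinarith



lemma phi_inner (q t x : ℝ) (hq : 0 < q) (ht : 0 < t) (hx : x ∈ Set.Icc (-1:ℝ) 1)
    (hx0 : x ≠ 0) :
    ∫ y in (-1:ℝ)..1, (1 - x*y + t)^(-q-1) = phi q t x := by
  have h := integral_rpow_linear (1+t) x q (-1) 1 hq.ne' hx0 ?_
  · rw [show (fun y : ℝ => (1 - x*y + t)^(-q-1)) = (fun y : ℝ => ((1+t) - x*y)^(-q-1))
      from funext fun y => by ring_nf]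
    rw [h, phi, show (1:ℝ)+t-x*1 = 1+t-x by ring, show (1:ℝ)+t-x*(-1) = 1+t+x by ring]
  · intro y hy
    rw [Set.uIcc_of_le (by norm_num)] at hy
    have h1 : |x*y| ≤ 1 := by
      rw [abs_mul]
      have := mul_le_mul (abs_le.2 ⟨hx.1, hx.2⟩) (abs_le.2 ⟨hy.1, hy.2⟩) (abs_nonneg y)
        zero_le_one
      linarith
    have h2 := le_abs_self (x*y)
    linarith [abs_nonneg (x*y)]

lemma phi_integrable (q t a b : ℝ) (hq : 0 < q) (ht : 0 < t)
    (ha : a ∈ Set.Icc (-1:ℝ) 1) (hb : b ∈ Set.Icc (-1:ℝ) 1) :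
    IntervalIntegrable (phi q t) volume a b := by
  apply IntervalIntegrable.mono_fun' (g := fun _ => 2*t^(-q-1)) intervalIntegrable_const
  · apply Measurable.aestronglyMeasurable
    unfold phi
    fun_prop
  · have hsub : Set.uIoc a b ⊆ Set.Icc (-1:ℝ) 1 := by
      refine Set.Subset.trans Set.uIoc_subset_uIcc ?_
      rw [← Set.uIcc_of_le (by norm_num : (-1:ℝ) ≤ 1)] at ha hb ⊢
      exact Set.uIcc_subset_uIcc ha hb
    filter_upwards [ae_restrict_mem measurableSet_uIoc] with x hx
    have hx' := hsub hx
    obtain ⟨h0, h1⟩ := phi_bounds q t x hq ht hx'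
    rw [Real.norm_eq_abs, abs_of_nonneg h0]
    calc phi q t x ≤ 2*(1+t-|x|)^(-q-1) := h1
    _ ≤ 2*t^(-q-1) := by
        have : t ≤ 1+t-|x| := by
          have h2 : |x| ≤ 1 := abs_le.2 ⟨hx'.1, hx'.2⟩
          linarith
        nlinarith [Real.rpow_le_rpow_of_nonpos ht this (by linarith : -q-1 ≤ 0)]

lemma integral_one_sub (t r u v : ℝ) (hr : r ≠ 0) (hpos : ∀ x ∈ Set.uIcc u v, 0 < 1+t-x) :
    ∫ x in u..v, (1+t-x)^(-r-1) = ((1+t-v)^(-r) - (1+t-u)^(-r))/r := by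
  have h := integral_rpow_linear (1+t) 1 r u v hr one_ne_zero (by simpa using hpos)
  simpa using h

set_option maxHeartbeats 800000 in
lemma main_est (q t : ℝ) (hq : 1 < q) (ht : 0 < t) (ht1 : t ≤ 1) :
    |(∫ x in (-1:ℝ)..1, ∫ y in (-1:ℝ)..1, (1 - x*y + t) ^ (-q-1)) * (q*(q-1)/2) * t^(q-1) - 1|
      ≤ t^(q-1)*((1/2+t)^(1-q)) + (q-1)*(q*2^(q+2)+1)*t^(q-1)
        + 6*(q-1)*t^(min 1 (q-1)/2) := by
  have hq0 : 0 < q := by linarith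
  have hq1 : q - 1 > 0 := by linarith
  have hqne : q ≠ 0 := hq0.ne'
  have hq1ne : q - 1 ≠ 0 := hq1.ne'
  set m : ℝ := min 1 (q-1) with hm
  have hm0 : 0 < m := lt_min one_pos hq1
  have hm1 : m ≤ 1 := min_le_left _ _
  have hmq : m ≤ q - 1 := min_le_right _ _
  clear_value m
  obtain ⟨bb, hbb⟩ : ∃ bb : ℝ, bb = -(m/2) := ⟨_, rfl⟩
  obtain ⟨aa, haa⟩ : ∃ aa : ℝ, aa = 1 - q - bb := ⟨_, rfl⟩
  have haa0 : aa ≤ 0 := by rw [haa, hbb]; simp only [sub_neg_eq_add]; linarith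
  have hbb1 : (1:ℝ)/2 ≤ bb + 1 := by rw [hbb]; linarith
  have hbb2 : bb + 1 ≤ 1 := by rw [hbb]; linarith
  have hmem : ∀ z : ℝ, z = -1 ∨ z = 0 ∨ z = 1/2 ∨ z = 1 → z ∈ Set.Icc (-1:ℝ) 1 := by
    rintro z (rfl | rfl | rfl | rfl) <;> norm_num
  -- Step A : replace inner integral by phi
  have hA : (∫ x in (-1:ℝ)..1, ∫ y in (-1:ℝ)..1, (1 - x*y + t) ^ (-q-1))
      = ∫ x in (-1:ℝ)..1, phi q t x := by
    apply intervalIntegral.integral_congr_ae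
    have h0 : ∀ᵐ (x:ℝ), x ≠ (0:ℝ) := by
      refine ae_iff.2 ?_
      simp only [not_not]
      have : {x : ℝ | x = 0} = {(0:ℝ)} := by ext z; simp
      rw [this]
      exact Real.volume_singleton
    filter_upwards [h0] with x hx0 hxm
    rw [Set.uIoc_of_le (by norm_num : (-1:ℝ) ≤ 1)] at hxm
    exact phi_inner q t x hq0 ht ⟨hxm.1.le, hxm.2⟩ hx0
  -- Step B : symmetry
  have hB : ∫ x in (0:ℝ)..1, phi q t x = ∫ x in (-1:ℝ)..0, phi q t x := by
    have h := intervalIntegral.integral_comp_neg (a := (0:ℝ)) (b := 1) (f := phi q t)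
    simpa only [phi_even, neg_zero] using h
  have hsplit1 : (∫ x in (-1:ℝ)..1, phi q t x) = 2 * ∫ x in (0:ℝ)..1, phi q t x := by
    rw [← intervalIntegral.integral_add_adjacent_intervals (a := (-1:ℝ)) (b := 0) (c := 1)
      (phi_integrable q t _ _ hq0 ht (hmem _ (by norm_num)) (hmem _ (by norm_num)))
      (phi_integrable q t _ _ hq0 ht (hmem _ (by norm_num)) (hmem _ (by norm_num))), ← hB]
    ring
  have hsplit2 : (∫ x in (0:ℝ)..1, phi q t x)
      = (∫ x in (0:ℝ)..(1/2), phi q t x) + ∫ x in (1/2:ℝ)..1, phi q t x :=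
    (intervalIntegral.integral_add_adjacent_intervals
      (phi_integrable q t _ _ hq0 ht (hmem _ (by norm_num)) (hmem _ (by norm_num)))
      (phi_integrable q t _ _ hq0 ht (hmem _ (by norm_num)) (hmem _ (by norm_num)))).symm
  -- E1 bound
  have hpow_half : ((1:ℝ)/2)^(-q-1) = 2^(q+1) := by
    rw [show ((1:ℝ)/2) = 2⁻¹ by norm_num, Real.inv_rpow (by norm_num : (0:ℝ) ≤ 2),
      ← Real.rpow_neg (by norm_num : (0:ℝ) ≤ 2), show -(-q-1) = q+1 by ring]
  have hE1 : |∫ x in (0:ℝ)..(1/2), phi q t x| ≤ 2^(q+1) := by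
    have h := intervalIntegral.norm_integral_le_of_norm_le_const (C := 2*2^(q+1))
      (f := phi q t) (a := 0) (b := 1/2) ?_
    · rw [Real.norm_eq_abs] at h
      calc |∫ x in (0:ℝ)..(1/2), phi q t x| ≤ 2*2^(q+1) * |((1:ℝ)/2) - 0| := h
        _ = 2^(q+1) := by rw [abs_of_nonneg (by norm_num : ((1:ℝ)/2) - 0 ≥ 0)]; ring
    · intro x hx
      rw [Set.uIoc_of_le (by norm_num : (0:ℝ) ≤ 1/2)] at hx
      have hx' : x ∈ Set.Icc (-1:ℝ) 1 := ⟨by linarith [hx.1], by linarith [hx.2]⟩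
      obtain ⟨h0, h1⟩ := phi_bounds q t x hq0 ht hx'
      rw [Real.norm_eq_abs, abs_of_nonneg h0]
      have habs : |x| ≤ 1/2 := abs_le.2 ⟨by linarith [hx.1], hx.2⟩
      have hhalf : (1:ℝ)/2 ≤ 1+t-|x| := by linarith
      have h2 := Real.rpow_le_rpow_of_nonpos (by norm_num : (0:ℝ) < 1/2) hhalf
        (by linarith : -q-1 ≤ 0)
      rw [hpow_half] at h2
      linarith
  -- exact main integral
  have hposA : ∀ x ∈ Set.uIcc (1/2:ℝ) 1, 0 < 1+t-x := by
    intro x hx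
    rw [Set.uIcc_of_le (by norm_num : (1/2:ℝ) ≤ 1)] at hx
    linarith [hx.2]
  have hM : ∫ x in (1/2:ℝ)..1, (1+t-x)^(-q)
      = (t^(1-q) - (1/2+t)^(1-q))/(q-1) := by
    have h := integral_one_sub t (q-1) (1/2) 1 (by linarith) hposA
    simp only [show -(q-1) = 1-q from by ring, show (1:ℝ)-q-1 = -q from by ring,
      show (1:ℝ)+t-1 = t from by ring,
      show (1:ℝ)+t-1/2 = 1/2+t from by ring] at h
    exact h
  -- error term on [1/2,1]
  have hAqint : IntervalIntegrable (fun x => (1+t-x)^(-q)/q) volume (1/2) 1 := by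
    apply ContinuousOn.intervalIntegrable
    apply ContinuousOn.div_const
    apply ContinuousOn.rpow_const (by fun_prop)
    intro x hx; exact Or.inl (hposA x hx).ne'
  have herrint : IntervalIntegrable (fun x => phi q t x - (1+t-x)^(-q)/q) volume (1/2) 1 :=
    (phi_integrable q t _ _ hq0 ht (hmem _ (by norm_num)) (hmem _ (by norm_num))).sub hAqint
  have hF : (∫ x in (1/2:ℝ)..1, phi q t x)
      = (∫ x in (1/2:ℝ)..1, (phi q t x - (1+t-x)^(-q)/q))
        + (t^(1-q) - (1/2+t)^(1-q))/(q-1)/q := by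
    have hsub := intervalIntegral.integral_sub
      (phi_integrable q t _ _ hq0 ht (hmem _ (by norm_num)) (hmem _ (by norm_num))) hAqint
    have hdiv : (∫ x in (1/2:ℝ)..1, (1+t-x)^(-q)/q)
        = (t^(1-q) - (1/2+t)^(1-q))/(q-1)/q := by
      rw [intervalIntegral.integral_div, hM]
    rw [hsub, hdiv]
    ring
  -- pointwise error bound
  have hptwise : ∀ x ∈ Set.Icc (1/2:ℝ) 1,
      |phi q t x - (1+t-x)^(-q)/q| ≤ (2*(t^aa * (1+t-x)^bb) + 2)/q := by
    intro x hx
    obtain ⟨hx1, hx2⟩ := hx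
    have hx0 : (0:ℝ) < x := by linarith
    have hApos : 0 < 1+t-x := by linarith
    have hBpos : (1:ℝ) ≤ 1+t+x := by linarith
    have heq : phi q t x - (1+t-x)^(-q)/q
        = ((1+t-x)^(-q)*(1-x) - (1+t+x)^(-q))/(q*x) := by
      unfold phi
      field_simp
      ring
    rw [heq, abs_div, abs_of_pos (by positivity : (0:ℝ) < q*x)]
    have hX0 : 0 ≤ t^aa * (1+t-x)^bb :=
      mul_nonneg (Real.rpow_nonneg ht.le _) (Real.rpow_nonneg hApos.le _)
    have hnum : |(1+t-x)^(-q)*(1-x) - (1+t+x)^(-q)| ≤ t^aa * (1+t-x)^bb + 1 := by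
      have hA1 : (1+t-x)^(-q)*(1-x) ≤ t^aa * (1+t-x)^bb := by
        calc (1+t-x)^(-q)*(1-x) ≤ (1+t-x)^(-q)*(1+t-x) := by
              apply mul_le_mul_of_nonneg_left (by linarith) (Real.rpow_nonneg hApos.le _)
          _ = (1+t-x)^(aa+bb) := by
              rw [show aa+bb = -q+1 from by rw [haa]; ring, Real.rpow_add hApos,
                Real.rpow_one]
          _ = (1+t-x)^aa * (1+t-x)^bb := Real.rpow_add hApos _ _
          _ ≤ t^aa * (1+t-x)^bb := by
              apply mul_le_mul_of_nonneg_right ?_ (Real.rpow_nonneg hApos.le _)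
              exact Real.rpow_le_rpow_of_nonpos ht (by linarith) haa0
      have hB1 : (1+t+x)^(-q) ≤ 1 :=
        Real.rpow_le_one_of_one_le_of_nonpos hBpos (by linarith)
      have hA0 : 0 ≤ (1+t-x)^(-q)*(1-x) :=
        mul_nonneg (Real.rpow_nonneg hApos.le _) (by linarith)
      have hB0 : 0 ≤ (1+t+x)^(-q) := Real.rpow_nonneg (by linarith) _
      rw [abs_sub_le_iff]
      constructor <;> nlinarith
    calc |(1+t-x)^(-q)*(1-x) - (1+t+x)^(-q)|/(q*x)
        ≤ (t^aa * (1+t-x)^bb + 1)/(q*x) := by gcongr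
      _ ≤ (2*(t^aa * (1+t-x)^bb) + 2)/q := by
          rw [div_le_div_iff₀ (by positivity) hq0]
          nlinarith [mul_nonneg (mul_nonneg hq0.le (by linarith : (0:ℝ) ≤ 2*x-1))
            (by linarith : (0:ℝ) ≤ t^aa * (1+t-x)^bb + 1)]
  -- J : integral of the rpow bound
  have hJval : (∫ x in (1/2:ℝ)..1, (1+t-x)^bb)
      = ((1/2+t)^(bb+1) - t^(bb+1))/(bb+1) := by
    have h := integral_one_sub t (-(bb+1)) (1/2) 1
      (neg_ne_zero.2 (ne_of_gt (show (0:ℝ) < bb+1 by linarith))) hposA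
    simp only [show -(-(bb+1)) = bb+1 from by ring, show bb+1-1 = bb from by ring,
      show (1:ℝ)+t-1 = t from by ring, show (1:ℝ)+t-1/2 = 1/2+t from by ring] at h
    rw [h, div_neg, ← neg_div, neg_sub]
  have hJ3 : (∫ x in (1/2:ℝ)..1, (1+t-x)^bb) ≤ 3 := by
    rw [hJval, div_le_iff₀ (by linarith : (0:ℝ) < bb+1)]
    have h32 : (1/2+t)^(bb+1) ≤ 3/2 := by
      calc (1/2+t)^(bb+1) ≤ (3/2)^(bb+1) :=
            Real.rpow_le_rpow (by linarith) (by linarith) (by linarith)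
        _ ≤ (3/2)^(1:ℝ) :=
            Real.rpow_le_rpow_of_exponent_le (by norm_num) hbb2
        _ = 3/2 := Real.rpow_one _
    have h0 : 0 ≤ t^(bb+1) := Real.rpow_nonneg ht.le _
    nlinarith
  have hJ0 : 0 ≤ (∫ x in (1/2:ℝ)..1, (1+t-x)^bb) := by
    rw [hJval]
    apply div_nonneg ?_ (by linarith)
    have := Real.rpow_le_rpow ht.le (by linarith : t ≤ 1/2+t) (by linarith : (0:ℝ) ≤ bb+1)
    linarith
  -- E2 bound
  have hbint : IntervalIntegrable (fun x => (2*(t^aa * (1+t-x)^bb) + 2)/q)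
      volume (1/2) 1 := by
    apply ContinuousOn.intervalIntegrable
    apply ContinuousOn.div_const
    apply ContinuousOn.add ?_ continuousOn_const
    apply ContinuousOn.mul continuousOn_const
    apply ContinuousOn.mul continuousOn_const
    apply ContinuousOn.rpow_const (by fun_prop)
    intro x hx; exact Or.inl (hposA x hx).ne'
  have hbval : (∫ x in (1/2:ℝ)..1, (2*(t^aa * (1+t-x)^bb) + 2)/q)
      = (2*t^aa*(∫ x in (1/2:ℝ)..1, (1+t-x)^bb) + 1)/q := by
    rw [intervalIntegral.integral_div]
    congr 1
    have hint1 : IntervalIntegrable (fun x => 2*(t^aa * (1+t-x)^bb)) volume (1/2) 1 := by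
      apply ContinuousOn.intervalIntegrable
      apply ContinuousOn.mul continuousOn_const
      apply ContinuousOn.mul continuousOn_const
      apply ContinuousOn.rpow_const (by fun_prop)
      intro x hx; exact Or.inl (hposA x hx).ne'
    rw [intervalIntegral.integral_add hint1 intervalIntegrable_const,
      intervalIntegral.integral_const]
    have h2 : (∫ x in (1/2:ℝ)..1, 2*(t^aa * (1+t-x)^bb))
        = 2*t^aa*(∫ x in (1/2:ℝ)..1, (1+t-x)^bb) := by
      rw [show (fun x => 2*(t^aa * (1+t-x)^bb)) = fun x => (2*t^aa)*((1+t-x)^bb)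
        from funext fun x => by ring, intervalIntegral.integral_const_mul]
    rw [h2]
    norm_num
  have hE2 : |∫ x in (1/2:ℝ)..1, (phi q t x - (1+t-x)^(-q)/q)| ≤ (6*t^aa + 1)/q := by
    have h1 : |∫ x in (1/2:ℝ)..1, (phi q t x - (1+t-x)^(-q)/q)|
        ≤ ∫ x in (1/2:ℝ)..1, |phi q t x - (1+t-x)^(-q)/q| :=
      intervalIntegral.abs_integral_le_integral_abs (by norm_num)
    have h2 : (∫ x in (1/2:ℝ)..1, |phi q t x - (1+t-x)^(-q)/q|)
        ≤ ∫ x in (1/2:ℝ)..1, (2*(t^aa * (1+t-x)^bb) + 2)/q :=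
      intervalIntegral.integral_mono_on (by norm_num) herrint.abs hbint hptwise
    have hta : 0 ≤ t^aa := Real.rpow_nonneg ht.le _
    have h3 : (2*t^aa*(∫ x in (1/2:ℝ)..1, (1+t-x)^bb) + 1)/q ≤ (6*t^aa + 1)/q := by
      rw [div_le_div_iff₀ hq0 hq0]
      nlinarith [mul_le_mul_of_nonneg_left hJ3 (mul_nonneg (by norm_num : (0:ℝ) ≤ 2) hta),
        hq0.le, hJ0]
    rw [hbval] at h2
    linarith
  -- assembly
  have htt : t^(q-1)*t^(1-q) = 1 := by
    rw [← Real.rpow_add ht, show q-1+(1-q) = 0 from by ring, Real.rpow_zero]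
  have hxta : t^(q-1)*t^aa = t^(m/2) := by
    rw [← Real.rpow_add ht]
    congr 1
    rw [haa, hbb]
    ring
  have hkey : (∫ x in (-1:ℝ)..1, ∫ y in (-1:ℝ)..1, (1 - x*y + t) ^ (-q-1))
      = 2*(∫ x in (0:ℝ)..(1/2), phi q t x)
        + 2*(∫ x in (1/2:ℝ)..1, (phi q t x - (1+t-x)^(-q)/q))
        + 2*((t^(1-q) - (1/2+t)^(1-q))/(q-1)/q) := by
    rw [hA, hsplit1, hsplit2, hF]
    ring
  have expand : (∫ x in (-1:ℝ)..1, ∫ y in (-1:ℝ)..1, (1 - x*y + t) ^ (-q-1))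
        * (q*(q-1)/2) * t^(q-1)
      = q*(q-1)*t^(q-1)*((∫ x in (0:ℝ)..(1/2), phi q t x)
          + (∫ x in (1/2:ℝ)..1, (phi q t x - (1+t-x)^(-q)/q)))
        + t^(q-1)*t^(1-q) - t^(q-1)*(1/2+t)^(1-q) := by
    rw [hkey]
    generalize (∫ x in (0:ℝ)..(1/2), phi q t x) = E1
    generalize (∫ x in (1/2:ℝ)..1, (phi q t x - (1+t-x)^(-q)/q)) = E2
    field_simp
    ring
  rw [expand, htt]
  have hX0 : 0 ≤ t^(q-1) := Real.rpow_nonneg ht.le _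
  have hP0 : 0 ≤ (1/2+t)^(1-q) := Real.rpow_nonneg (by linarith) _
  have h2q : (2:ℝ)^(q+1) ≤ 2^(q+2) := Real.rpow_le_rpow_of_exponent_le one_le_two (by linarith)
  have hta : 0 ≤ t^aa := Real.rpow_nonneg ht.le _
  set E1 := ∫ x in (0:ℝ)..(1/2), phi q t x with hE1def
  set E2 := ∫ x in (1/2:ℝ)..1, (phi q t x - (1+t-x)^(-q)/q) with hE2def
  have hcoef : 0 ≤ q*(q-1)*t^(q-1) := mul_nonneg (mul_nonneg hq0.le (by linarith)) hX0
  rw [show q*(q-1)*t^(q-1)*(E1+E2) + 1 - t^(q-1)*(1/2+t)^(1-q) - 1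
    = q*(q-1)*t^(q-1)*(E1+E2) - t^(q-1)*(1/2+t)^(1-q) from by ring]
  calc |q*(q-1)*t^(q-1)*(E1+E2) - t^(q-1)*(1/2+t)^(1-q)|
      ≤ |q*(q-1)*t^(q-1)*(E1+E2)| + |t^(q-1)*(1/2+t)^(1-q)| := abs_sub _ _
    _ = q*(q-1)*t^(q-1)*|E1+E2| + t^(q-1)*((1/2+t)^(1-q)) := by
        rw [abs_mul, abs_of_nonneg hcoef, abs_of_nonneg (mul_nonneg hX0 hP0)]
    _ ≤ q*(q-1)*t^(q-1)*(2^(q+1) + (6*t^aa+1)/q) + t^(q-1)*((1/2+t)^(1-q)) := by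
        have hEE : |E1+E2| ≤ 2^(q+1) + (6*t^aa+1)/q :=
          (abs_add_le E1 E2).trans (add_le_add hE1 hE2)
        have := mul_le_mul_of_nonneg_left hEE hcoef
        linarith
    _ ≤ t^(q-1)*((1/2+t)^(1-q)) + (q-1)*(q*2^(q+2)+1)*t^(q-1) + 6*(q-1)*t^(m/2) := by
        rw [← hxta]
        have expand2 : q*(q-1)*t^(q-1)*(2^(q+1) + (6*t^aa+1)/q)
            = (q-1)*(q*2^(q+1)+1)*t^(q-1) + 6*(q-1)*(t^(q-1)*t^aa) := by
          field_simp
          ring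
        rw [expand2]
        have hmono : (q-1)*(q*2^(q+1)+1)*t^(q-1) ≤ (q-1)*(q*2^(q+2)+1)*t^(q-1) := by
          apply mul_le_mul_of_nonneg_right ?_ hX0
          apply mul_le_mul_of_nonneg_left ?_ (by linarith)
          nlinarith [h2q]
        linarith

lemma tendsto_rpow_zero (c : ℝ) (hc : 0 < c) :
    Tendsto (fun t : ℝ => t ^ c) (nhdsWithin 0 (Set.Ioi 0)) (nhds 0) := by
  have h : ContinuousAt (fun t : ℝ => t ^ c) 0 :=
    Real.continuousAt_rpow_const 0 c (Or.inr hc.le)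
  have h2 := h.tendsto
  rw [Real.zero_rpow hc.ne'] at h2
  exact h2.mono_left nhdsWithin_le_nhds

theorem key_tendsto (q : ℝ) (hq : 1 < q) :
    Tendsto (fun t : ℝ =>
      (∫ x in (-1:ℝ)..1, ∫ y in (-1:ℝ)..1, (1 - x*y + t) ^ (-q-1)) /
        ((2/(q*(q-1))) * t^(1-q))) (nhdsWithin 0 (Set.Ioi 0)) (nhds 1) := by
  have hq0 : 0 < q := by linarith
  have hq1 : (0:ℝ) < q - 1 := by linarith
  have hqne : q ≠ 0 := hq0.ne'
  have hq1ne : q - 1 ≠ 0 := hq1.ne'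
  -- the tendsto of the product form
  have hg0 : Tendsto (fun t : ℝ => t^(q-1)*((1/2+t)^(1-q)) + (q-1)*(q*2^(q+2)+1)*t^(q-1)
      + 6*(q-1)*t^(min 1 (q-1)/2)) (nhdsWithin 0 (Set.Ioi 0)) (nhds 0) := by
    have h1 := tendsto_rpow_zero (q-1) hq1
    have h2 : Tendsto (fun t : ℝ => (1/2+t)^(1-q)) (nhdsWithin (0:ℝ) (Set.Ioi 0))
        (nhds (((1:ℝ)/2+0)^(1-q))) := by
      have hc : ContinuousAt (fun t : ℝ => ((1:ℝ)/2+t)^(1-q)) 0 := by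
        apply ContinuousAt.rpow_const (by fun_prop)
        exact Or.inl (by norm_num)
      exact hc.tendsto.mono_left nhdsWithin_le_nhds
    have h3 := tendsto_rpow_zero (min 1 (q-1)/2) (by positivity)
    have hall := ((h1.mul h2).add ((h1.const_mul ((q-1)*(q*2^(q+2)+1))).add
      (h3.const_mul (6*(q-1)))))
    simp only [zero_mul, mul_zero, add_zero] at hall
    convert hall using 2 with t
    ring
  have hL : Tendsto (fun t : ℝ =>
      (∫ x in (-1:ℝ)..1, ∫ y in (-1:ℝ)..1, (1 - x*y + t) ^ (-q-1)) * (q*(q-1)/2) * t^(q-1))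
      (nhdsWithin 0 (Set.Ioi 0)) (nhds 1) := by
    apply tendsto_of_tendsto_of_tendsto_of_le_of_le'
      (g := fun t : ℝ => 1 - (t^(q-1)*((1/2+t)^(1-q)) + (q-1)*(q*2^(q+2)+1)*t^(q-1)
        + 6*(q-1)*t^(min 1 (q-1)/2)))
      (h := fun t : ℝ => 1 + (t^(q-1)*((1/2+t)^(1-q)) + (q-1)*(q*2^(q+2)+1)*t^(q-1)
        + 6*(q-1)*t^(min 1 (q-1)/2)))
    · simpa using tendsto_const_nhds.sub hg0
    · simpa using tendsto_const_nhds.add hg0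
    · filter_upwards [Ioo_mem_nhdsGT one_pos]
        with t htm
      have h := main_est q t hq htm.1 htm.2.le
      have h2 := abs_le.1 h
      linarith [h2.1]
    · filter_upwards [Ioo_mem_nhdsGT one_pos]
        with t htm
      have h := main_est q t hq htm.1 htm.2.le
      have h2 := abs_le.1 h
      linarith [h2.2]
  apply hL.congr'
  filter_upwards [self_mem_nhdsWithin] with t ht
  have ht0 : (0:ℝ) < t := ht
  have hinv : t^(q-1) = (t^(1-q))⁻¹ := by
    rw [show q-1 = -(1-q) from by ring, Real.rpow_neg ht0.le]
  have htne : t^(1-q) ≠ 0 := (Real.rpow_pos_of_pos ht0 _).ne'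
  rw [hinv]
  field_simp

theorem double_integral_asymptotics (s : ℝ) (hs0 : 0 ≤ s) (hs4 : s < 4)
    (n : ℕ) (hn : (1:ℝ) - s/2 < n) :
    Tendsto (fun t : ℝ =>
        (∫ x in (-1:ℝ)..1, ∫ y in (-1:ℝ)..1, (1 - x*y + t) ^ (-(s/2) - n - 1)) /
          ((2 / (((n:ℝ) + s/2) * ((n:ℝ) + s/2 - 1))) * t ^ (1 - s/2 - (n:ℝ))))
      (nhdsWithin 0 (Set.Ioi 0)) (nhds 1) := by
  have hq : 1 < (n:ℝ) + s/2 := by linarith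
  have h := key_tendsto ((n:ℝ) + s/2) hq
  simp only [show -(s/2) - (n:ℝ) - 1 = -((n:ℝ)+s/2) - 1 from by ring,
    show (1:ℝ) - s/2 - (n:ℝ) = 1 - ((n:ℝ)+s/2) from by ring]
  exact h
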